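/- Let T₁, T₂ : ℝ → ℝ be measurable functions with 0 ≤ T₁(x) ≤ 1 and 0 ≤ T₂(x) ≤ 1 for all x, such that T₁ − T₂ ∈ L¹(ℝ) ∩ L²(ℝ) and T₁(1 − T₁), T₂(1 − T₂) ∈ L¹(ℝ). Then ∫_ℝ |T₁(x) − T₂(x)| dx ≤ 3 [ ∫_ℝ (T₁(x) − T₂(x))² dx + ∫_ℝ ( T₁(x)(1 − T₁(x)) + T₂(x)(1 − T₂(x)) ) dx ]. -/

import Mathlib

open MeasureTheory

/-- For measurable `T₁, T₂ : ℝ → ℝ` with values in `[0,1]`, with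
`T₁ − T₂ ∈ L¹ ∩ L²` and `T₁(1−T₁), T₂(1−T₂) ∈ L¹`:
`∫|T₁ − T₂| ≤ 3[∫(T₁ − T₂)² + ∫(T₁(1−T₁) + T₂(1−T₂))]`. -/
theorem L1_dist_le_L2_plus_reaction (T₁ T₂ : ℝ → ℝ)
    (hm₁ : Measurable T₁) (hm₂ : Measurable T₂)
    (h₁0 : ∀ x, 0 ≤ T₁ x) (h₁1 : ∀ x, T₁ x ≤ 1)
    (h₂0 : ∀ x, 0 ≤ T₂ x) (h₂1 : ∀ x, T₂ x ≤ 1)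
    (hL1 : Integrable (fun x => T₁ x - T₂ x))
    (hL2 : MemLp (fun x => T₁ x - T₂ x) 2)
    (hr₁ : Integrable (fun x => T₁ x * (1 - T₁ x)))
    (hr₂ : Integrable (fun x => T₂ x * (1 - T₂ x))) :
    ∫ x : ℝ, |T₁ x - T₂ x| ≤
      3 * ((∫ x : ℝ, (T₁ x - T₂ x) ^ 2) +
        ∫ x : ℝ, (T₁ x * (1 - T₁ x) + T₂ x * (1 - T₂ x))) := by
  have hd2 : Integrable (fun x => (T₁ x - T₂ x) ^ 2) := by
    simpa [sq] using hL2.integrable_sq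
  have habs : Integrable (fun x => |T₁ x - T₂ x|) := hL1.abs
  have hrr : Integrable (fun x => T₁ x * (1 - T₁ x) + T₂ x * (1 - T₂ x)) :=
    hr₁.add hr₂
  have hs : Integrable (fun x => (T₁ x - T₂ x) ^ 2 +
      (T₁ x * (1 - T₁ x) + T₂ x * (1 - T₂ x))) := hd2.add hrr
  have hmono : ∫ x : ℝ, |T₁ x - T₂ x| ≤
      ∫ x : ℝ, 3 * ((T₁ x - T₂ x) ^ 2 + (T₁ x * (1 - T₁ x) + T₂ x * (1 - T₂ x))) := by
    refine integral_mono habs (hs.const_mul 3) (fun x => ?_)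
    rcases abs_cases (T₁ x - T₂ x) with ⟨h, _⟩ | ⟨h, _⟩ <;> rw [h] <;>
      nlinarith [sq_nonneg (T₁ x - T₂ x), h₁0 x, h₁1 x, h₂0 x, h₂1 x,
        sq_nonneg (T₁ x + T₂ x - 1)]
  calc ∫ x : ℝ, |T₁ x - T₂ x| ≤ _ := hmono
    _ = 3 * ((∫ x : ℝ, (T₁ x - T₂ x) ^ 2) +
        ∫ x : ℝ, (T₁ x * (1 - T₁ x) + T₂ x * (1 - T₂ x))) := by
        rw [integral_const_mul, integral_add hd2 hrr]
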